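/- Let c₀ ∈ (1,∞) be the unique zero of ψ(t) = (t+1)ln(t+1) + (t−1)ln(t−1) − 2t in (1,∞). Let c > c₀, M > 0, and define r : ℝ → (0,∞) by r(x) := max{c|x|, M}. Then there exists α ∈ (0,1) such that the function x ↦ r(x)^{−α} is (λ,r)-supermedian on ℝ, i.e. (1/(2r(x)))∫_{x−r(x)}^{x+r(x)} r(s)^{−α} ds ≤ r(x)^{−α} for every x ∈ ℝ. -/

import Mathlib

open Filter MeasureTheory Topology

/-- `ψ(t) = (t+1)ln(t+1) + (t-1)ln(t-1) - 2t`. -/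
noncomputable def psi (t : ℝ) : ℝ :=
  (t + 1) * Real.log (t + 1) + (t - 1) * Real.log (t - 1) - 2 * t

lemma psi_hasDerivAt {t : ℝ} (ht : 1 < t) :
    HasDerivAt psi (Real.log (t + 1) + Real.log (t - 1)) t := by
  have h1a : HasDerivAt (fun t : ℝ => t + 1) 1 t := (hasDerivAt_id t).add_const 1
  have h2a : HasDerivAt (fun t : ℝ => t - 1) 1 t := (hasDerivAt_id t).sub_const 1
  have h1b : HasDerivAt (fun t : ℝ => Real.log (t + 1)) ((t+1)⁻¹ * 1) t :=
    (Real.hasDerivAt_log (by linarith)).comp t h1a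
  have h2b : HasDerivAt (fun t : ℝ => Real.log (t - 1)) ((t-1)⁻¹ * 1) t :=
    (Real.hasDerivAt_log (by linarith)).comp t h2a
  have h1 := h1a.mul h1b
  have h2 := h2a.mul h2b
  have h3 : HasDerivAt (fun t : ℝ => 2 * t) 2 t := by
    simpa using (hasDerivAt_id t).const_mul (2:ℝ)
  have := (h1.add h2).sub h3
  refine this.congr_deriv ?_
  have e1 : (t:ℝ) + 1 ≠ 0 := by linarith
  have e2 : (t:ℝ) - 1 ≠ 0 := by linarith
  simp only [mul_one, one_mul, mul_inv_cancel₀ e1, mul_inv_cancel₀ e2]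
  ring

lemma psi_pos {c₀ c : ℝ} (hc₀1 : 1 < c₀) (hc₀ : psi c₀ = 0) (hc : c₀ < c) : 0 < psi c := by
  -- first, c₀^2 > 2
  have hc₀2 : 2 < c₀ ^ 2 := by
    by_contra h
    push_neg at h
    have h15 : c₀ < 1.5 := by nlinarith
    have hlog1 : Real.log (c₀ + 1) < 1 := by
      rw [Real.log_lt_iff_lt_exp (by linarith)]
      have := Real.exp_one_gt_d9
      linarith
    have hlog2 : Real.log (c₀ - 1) ≤ 0 :=
      Real.log_nonpos (by linarith) (by linarith)
    have hA : (c₀ + 1) * Real.log (c₀ + 1) < c₀ + 1 := by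
      nlinarith [Real.log_nonneg (show (1:ℝ) ≤ c₀ + 1 by linarith)]
    have hB : (c₀ - 1) * Real.log (c₀ - 1) ≤ 0 :=
      mul_nonpos_of_nonneg_of_nonpos (by linarith) hlog2
    have : psi c₀ < 0 := by
      simp only [psi]
      nlinarith
    linarith [hc₀ ▸ this]
  have hmono : StrictMonoOn psi (Set.Icc c₀ c) := by
    refine strictMonoOn_of_deriv_pos (convex_Icc _ _) ?_ ?_
    · intro t ht
      exact ((psi_hasDerivAt (lt_of_lt_of_le hc₀1 ht.1)).continuousAt).continuousWithinAt
    · intro t ht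
      rw [interior_Icc] at ht
      have ht1 : 1 < t := lt_trans hc₀1 ht.1
      rw [(psi_hasDerivAt ht1).deriv]
      rw [← Real.log_mul (by linarith) (by linarith)]
      apply Real.log_pos
      nlinarith [ht.1]
  have := hmono (Set.left_mem_Icc.mpr hc.le) (Set.right_mem_Icc.mpr hc.le) hc
  linarith [hc₀ ▸ this]

lemma exists_alpha {c : ℝ} (hc1 : 1 < c) (hψ : 0 < psi c) :
    ∃ α : ℝ, 0 < α ∧ α < 1 ∧ (c+1) ^ (1-α) + (c-1) ^ (1-α) ≤ 2*c*(1-α) := by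
  set h : ℝ → ℝ := fun α => (c+1) ^ (1-α) + (c-1) ^ (1-α) - 2*c*(1-α) with hh
  have hinner : HasDerivAt (fun α : ℝ => 1 - α) (-1) 0 := by
    simpa using (hasDerivAt_id (0:ℝ)).const_sub 1
  have hp1 : HasDerivAt (fun α : ℝ => (c+1) ^ (1-α))
      (-((c+1) * Real.log (c+1))) 0 := by
    have := ((Real.hasStrictDerivAt_const_rpow (show (0:ℝ) < c+1 by linarith)
      ((1:ℝ) - 0)).hasDerivAt).comp 0 hinner
    refine this.congr_deriv ?_
    rw [sub_zero, Real.rpow_one]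
    ring
  have hp2 : HasDerivAt (fun α : ℝ => (c-1) ^ (1-α))
      (-((c-1) * Real.log (c-1))) 0 := by
    have := ((Real.hasStrictDerivAt_const_rpow (show (0:ℝ) < c-1 by linarith)
      ((1:ℝ) - 0)).hasDerivAt).comp 0 hinner
    refine this.congr_deriv ?_
    rw [sub_zero, Real.rpow_one]
    ring
  have hp3 : HasDerivAt (fun α : ℝ => 2*c*(1-α)) (-(2*c)) 0 := by
    simpa using hinner.const_mul (2*c)
  have hder : HasDerivAt h (-(psi c)) 0 := by
    have := (hp1.add hp2).sub hp3
    refine this.congr_deriv ?_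
    simp only [psi]
    ring
  have h0 : h 0 = 0 := by simp [hh]; ring
  have hslope : Tendsto (slope h 0) (𝓝[>] (0:ℝ)) (𝓝 (-(psi c))) :=
    (hasDerivAt_iff_tendsto_slope.mp hder).mono_left
      (nhdsWithin_mono _ (fun y hy => ne_of_gt hy))
  have hev1 : ∀ᶠ α in 𝓝[>] (0:ℝ), slope h 0 α < 0 :=
    hslope.eventually_lt_const (by linarith)
  have hev2 : ∀ᶠ α in 𝓝[>] (0:ℝ), α < 1 :=
    eventually_nhdsWithin_of_eventually_nhds (eventually_lt_nhds zero_lt_one)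
  have hev3 : ∀ᶠ α in 𝓝[>] (0:ℝ), 0 < α := eventually_mem_nhdsWithin
  obtain ⟨α, ⟨hs, hα1⟩, hα0⟩ := ((hev1.and hev2).and hev3).exists
  refine ⟨α, hα0, hα1, ?_⟩
  rw [slope_def_field, h0, sub_zero, sub_zero, div_neg_iff] at hs
  rcases hs with ⟨_, h2⟩ | ⟨h1, _⟩
  · linarith
  · simp only [hh] at h1; linarith

section
variable {c M α : ℝ}

lemma f_cont (hM : 0 < M) : Continuous (fun s : ℝ => (max (c * |s|) M) ^ (-α)) :=
  ((continuous_const.mul continuous_abs).max continuous_const).rpow_const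
    (fun s => Or.inl (ne_of_gt (lt_of_lt_of_le hM (le_max_right _ _))))

lemma aux_half (hc0 : 0 < c) (hM : 0 < M) (hα0 : 0 < α) (hα1 : α < 1) {b : ℝ} (hb : 0 ≤ b) :
    ∫ s in (0:ℝ)..b, (max (c * |s|) M) ^ (-α) ≤ c ^ (-α) * (b ^ (1-α) / (1-α)) := by
  have hint : IntervalIntegrable (fun s : ℝ => (max (c * |s|) M) ^ (-α)) volume 0 b :=
    (f_cont hM).intervalIntegrable 0 b
  have hg : IntervalIntegrable (fun s : ℝ => c ^ (-α) * s ^ (-α)) volume 0 b :=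
    (intervalIntegral.intervalIntegrable_rpow' (by linarith)).const_mul _
  have hae : (fun s : ℝ => (max (c * |s|) M) ^ (-α))
      ≤ᵐ[volume.restrict (Set.Icc (0:ℝ) b)] (fun s : ℝ => c ^ (-α) * s ^ (-α)) := by
    have hzero : (volume.restrict (Set.Icc (0:ℝ) b)) {0} = 0 :=
      le_antisymm (le_trans (Measure.restrict_le_self _) (by simp)) zero_le
    have hne : ∀ᵐ s ∂(volume.restrict (Set.Icc (0:ℝ) b)), s ≠ 0 := by
      have hset : {s : ℝ | ¬ s ≠ 0} = {0} := by ext; simp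
      rw [MeasureTheory.ae_iff, hset]; exact hzero
    have hmem : Set.Icc (0:ℝ) b ∈ ae (volume.restrict (Set.Icc (0:ℝ) b)) :=
      MeasureTheory.self_mem_ae_restrict measurableSet_Icc
    filter_upwards [hne, hmem] with s hs hsmem
    have hspos : 0 < s := lt_of_le_of_ne hsmem.1 (Ne.symm hs)
    have h2 : c * s ≤ max (c * |s|) M := by
      rw [abs_of_pos hspos]; exact le_max_left _ _
    calc (max (c * |s|) M) ^ (-α) ≤ (c * s) ^ (-α) :=
          Real.rpow_le_rpow_of_nonpos (by positivity) h2 (by linarith)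
      _ = c ^ (-α) * s ^ (-α) := Real.mul_rpow hc0.le hspos.le
  have hmono := intervalIntegral.integral_mono_ae_restrict hb hint hg hae
  refine hmono.trans_eq ?_
  rw [intervalIntegral.integral_const_mul, integral_rpow (Or.inl (by linarith))]
  rw [Real.zero_rpow (by linarith : -α + 1 ≠ 0), sub_zero, neg_add_eq_sub]

lemma aux_nonneg (hc1 : 1 < c) (hM : 0 < M) (hα0 : 0 < α) (hα1 : α < 1)
    (hkey : (c+1) ^ (1-α) + (c-1) ^ (1-α) ≤ 2*c*(1-α)) {x : ℝ} (hx : 0 ≤ x) :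
    (1 / (2 * max (c * |x|) M)) *
        (∫ s in (x - max (c * |x|) M)..(x + max (c * |x|) M),
          (max (c * |s|) M) ^ (-α))
      ≤ (max (c * |x|) M) ^ (-α) := by
  have hc0 : 0 < c := by linarith
  set f : ℝ → ℝ := fun s => (max (c * |s|) M) ^ (-α) with hf
  set R := max (c * |x|) M with hR
  have hRpos : 0 < R := lt_of_lt_of_le hM (le_max_right _ _)
  rw [one_div, inv_mul_le_iff₀ (by positivity)]
  -- goal: ∫ ≤ 2 * R * R ^ (-α)
  rcases le_or_gt (c * |x|) M with hcase | hcase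
  · -- R = M
    have hRM : R = M := max_eq_right hcase
    have hb : x - R ≤ x + R := by linarith
    have hmono : (∫ s in (x-R)..(x+R), f s) ≤ ∫ _s in (x-R)..(x+R), (M:ℝ) ^ (-α) :=
      intervalIntegral.integral_mono_on hb
        ((f_cont hM).intervalIntegrable _ _)
        intervalIntegrable_const
        (fun s _ => Real.rpow_le_rpow_of_nonpos hM (le_max_right _ _) (by linarith : -α ≤ 0))
    refine hmono.trans_eq ?_
    rw [intervalIntegral.integral_const, smul_eq_mul, hRM]
    ring
  · -- R = c * x, x > 0
    have hxpos : 0 < x := by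
      rcases hx.lt_or_eq with h | h
      · exact h
      · exfalso; rw [← h, abs_zero, mul_zero] at hcase; linarith
    have habs : |x| = x := abs_of_pos hxpos
    have hRcx : R = c * x := by rw [hR, habs, max_eq_left (by rw [habs] at hcase; linarith)]
    have hsplit : (∫ s in (x-R)..(x+R), f s)
        = (∫ s in (x-R)..(0:ℝ), f s) + ∫ s in (0:ℝ)..(x+R), f s :=
      (intervalIntegral.integral_add_adjacent_intervals
        ((f_cont hM).intervalIntegrable _ _) ((f_cont hM).intervalIntegrable _ _)).symm
    have hflip : (∫ s in (x-R)..(0:ℝ), f s) = ∫ s in (0:ℝ)..(R-x), f s := by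
      have := intervalIntegral.integral_comp_neg (a := (0:ℝ)) (b := R - x) f
      simp only [neg_zero, neg_sub] at this
      rw [← this]
      congr 1
      ext s
      simp [hf, abs_neg]
    have h1 : (∫ s in (0:ℝ)..(R-x), f s) ≤ c ^ (-α) * ((R-x) ^ (1-α) / (1-α)) :=
      aux_half hc0 hM hα0 hα1 (by rw [hRcx]; nlinarith)
    have h2 : (∫ s in (0:ℝ)..(x+R), f s) ≤ c ^ (-α) * ((x+R) ^ (1-α) / (1-α)) :=
      aux_half hc0 hM hα0 hα1 (by linarith)
    rw [hsplit, hflip]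
    have hRx1 : R - x = (c-1) * x := by rw [hRcx]; ring
    have hRx2 : x + R = (c+1) * x := by rw [hRcx]; ring
    have e1 : (R-x) ^ (1-α) = (c-1) ^ (1-α) * x ^ (1-α) := by
      rw [hRx1, Real.mul_rpow (by linarith) hxpos.le]
    have e2 : (x+R) ^ (1-α) = (c+1) ^ (1-α) * x ^ (1-α) := by
      rw [hRx2, Real.mul_rpow (by linarith) hxpos.le]
    have hfinal : c ^ (-α) * ((R-x) ^ (1-α) / (1-α)) + c ^ (-α) * ((x+R) ^ (1-α) / (1-α))
        ≤ 2 * R * R ^ (-α) := by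
      rw [e1, e2]
      have hRpow : 2 * R * R ^ (-α) = 2 * c * (c ^ (-α) * x ^ (1-α)) := by
        rw [hRcx, Real.mul_rpow hc0.le hxpos.le]
        have hx1 : x * x ^ (-α) = x ^ (1-α) := by
          rw [show (1:ℝ)-α = 1 + -α by ring, Real.rpow_add hxpos, Real.rpow_one]
        rw [← hx1]; ring
      rw [hRpow]
      have hcx : 0 < c ^ (-α) * x ^ (1-α) / (1-α) :=
        div_pos (mul_pos (Real.rpow_pos_of_pos hc0 _) (Real.rpow_pos_of_pos hxpos _))
          (by linarith)
      calc c ^ (-α) * ((c-1) ^ (1-α) * x ^ (1-α) / (1-α))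
            + c ^ (-α) * ((c+1) ^ (1-α) * x ^ (1-α) / (1-α))
          = ((c+1) ^ (1-α) + (c-1) ^ (1-α)) * (c ^ (-α) * x ^ (1-α) / (1-α)) := by ring
        _ ≤ (2*c*(1-α)) * (c ^ (-α) * x ^ (1-α) / (1-α)) :=
            mul_le_mul_of_nonneg_right hkey hcx.le
        _ = 2 * c * (c ^ (-α) * x ^ (1-α)) := by
            have hne : (1:ℝ) - α ≠ 0 := by linarith
            field_simp
    linarith [h1, h2, hfinal]

end

/-- Proposition 1.4.2: with `c₀` the unique zero of `ψ` in `(1,∞)`, if `c > c₀`,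
`M > 0` and `r := max(c|·|, M)`, then there is `α ∈ (0,1)` such that `r^{-α}` is
`(λ,r)`-supermedian on `ℝ`. -/
theorem stmt5 (c₀ c M : ℝ) (hc₀1 : 1 < c₀) (hc₀ : psi c₀ = 0) (hc : c₀ < c)
    (hM : 0 < M) :
    ∃ α : ℝ, 0 < α ∧ α < 1 ∧ ∀ x : ℝ,
      (1 / (2 * max (c * |x|) M)) *
        (∫ s in (x - max (c * |x|) M)..(x + max (c * |x|) M),
          (max (c * |s|) M) ^ (-α))
      ≤ (max (c * |x|) M) ^ (-α) := by
  have hc1 : 1 < c := lt_trans hc₀1 hc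
  obtain ⟨α, hα0, hα1, hkey⟩ := exists_alpha hc1 (psi_pos hc₀1 hc₀ hc)
  refine ⟨α, hα0, hα1, fun x => ?_⟩
  rcases le_or_gt 0 x with hx | hx
  · exact aux_nonneg hc1 hM hα0 hα1 hkey hx
  · have key := aux_nonneg hc1 hM hα0 hα1 hkey (show (0:ℝ) ≤ -x by linarith)
    rw [abs_neg] at key
    set R := max (c * |x|) M with hR
    have hflip : (∫ s in (x - R)..(x + R), (max (c * |s|) M) ^ (-α))
        = ∫ s in (-x - R)..(-x + R), (max (c * |s|) M) ^ (-α) := by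
      have h := intervalIntegral.integral_comp_neg
        (a := x - R) (b := x + R) (fun s : ℝ => (max (c * |s|) M) ^ (-α))
      simp only [abs_neg] at h
      rw [h]
      congr 1 <;> ring
    rw [hflip]
    exact key
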